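/- Associativity of diagram composition with a higher-dimensional diagram: for well-defined n-diagrams D, S and a well-defined l-diagram M with l > n > 0, such that the composites exist, S∘(D∘M) = (S∘D)∘M. -/

import Mathlib

/-!
Data structures for quasistrict higher categories (Bar–Vicary).
A 0-diagram is a single generator; an (n+1)-diagram is a source n-diagram
together with a list of cells, each a generator name with embedding data.
Embedding data between n-diagrams is a list of n heights; composition of
embeddings adds heights at every level, and the lifted embedding `Λ(e,T)`
has the same data as `e`.
-/

namespace QS

inductive Diagram : Type where
  | base (g : ℕ) : Diagram
  | step (s : Diagram) (c : List (ℕ × List ℕ)) : Diagram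

namespace Diagram

/-- Dimension of a diagram. -/
def dim : Diagram → ℕ
  | base _ => 0
  | step s _ => s.dim + 1

/-- The source (n−1)-diagram of an n-diagram (junk at dimension 0). -/
def src : Diagram → Diagram
  | base g => base g
  | step s _ => s

/-- The list of cells: generator names with embedding data. -/
def cells : Diagram → List (ℕ × List ℕ)
  | base _ => []
  | step _ c => c

/-- The length `|D|` of a diagram. -/
def size : Diagram → ℕ
  | base _ => 1
  | step _ c => c.length

/-- The unique generator of a 0-diagram. -/
def gen : Diagram → ℕ
  | base g => g
  | step _ _ => 0

end Diagram

/-- A signature assigns to each generator name of each dimension `k ≥ 1` a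
source and a target (k−1)-diagram. -/
structure Signature where
  gsrc : ℕ → ℕ → Diagram
  gtgt : ℕ → ℕ → Diagram

/-- Data of the composite embedding `f ∘ e`: `(f ∘ e).h = e.h + f.h`
recursively at every level, i.e. pointwise addition of height data. -/
def embComp (f e : List ℕ) : List ℕ := List.zipWith (· + ·) f e

/-- Data of the lifted embedding `Λ(e, T) : T ↪ D⟨e : S → T⟩`: the same
height data as `e` (`Λ(e,T).h = e.h`, `Λ(e,T).e = e.e`). -/
def liftEmb (e : List ℕ) (_T : Diagram) : List ℕ := e

/-- Data of the identity embedding on an n-diagram: height 0 at every level. -/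
def idEmb (n : ℕ) : List ℕ := List.replicate n 0

/-- The rewrite `D⟨e : S → T⟩`: remove the copy of `S` embedded at height
`e.h` and insert `T`, with the embeddings of `T` composed with the lift of
`e.e`. -/
def rewriteDiag (D : Diagram) (e : List ℕ) (S T : Diagram) : Diagram :=
  match D with
  | .base _ => T
  | .step s c =>
      .step s (c.take (e.headD 0)
        ++ T.cells.map (fun x => (x.1, embComp (liftEmb e.tail T) x.2))
        ++ c.drop (e.headD 0 + S.cells.length))

/-- The slice `D[i].d`, obtained by sequential rewriting from the source. -/
def slice (σ : Signature) (D : Diagram) : ℕ → Diagram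
  | 0 => D.src
  | i + 1 =>
      rewriteDiag (slice σ D i) (D.cells.getD i default).2
        (σ.gsrc D.dim (D.cells.getD i default).1)
        (σ.gtgt D.dim (D.cells.getD i default).1)

/-- The target `D.t := D[|D|].d`. -/
def tgt (σ : Signature) (D : Diagram) : Diagram := slice σ D D.cells.length

/-- Iterated source `s^k`. -/
def srcIter : ℕ → Diagram → Diagram
  | 0, D => D
  | k + 1, D => srcIter k D.src

/-- Iterated target `t^k`. -/
def tgtIter (σ : Signature) : ℕ → Diagram → Diagram
  | 0, D => D
  | k + 1, D => tgtIter σ k (tgt σ D)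

/-- Well-definedness of an embedding `e : S ↪ D`: for 0-diagrams the unique
generators agree; otherwise the component embedding is well-defined, the
image is in range, and the generators and embeddings of `S` match those of
`D` at heights shifted by `e.h` (via the lift of `e.e`). -/
def wdEmb (σ : Signature) : List ℕ → Diagram → Diagram → Prop
  | e, .base g, D => e = [] ∧ D.gen = g
  | e, .step Ss Sc, D =>
      e.length = Ss.dim + 1 ∧
      e.headD 0 + Sc.length ≤ D.cells.length ∧
      wdEmb σ e.tail Ss (slice σ D (e.headD 0)) ∧
      ∀ i < Sc.length,
        (Sc.getD i default).1 = (D.cells.getD (i + e.headD 0) default).1 ∧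
        embComp e.tail (Sc.getD i default).2
          = (D.cells.getD (i + e.headD 0) default).2

/-- Auxiliary well-definedness predicate for diagrams, by dimension. -/
def wdAux (σ : Signature) : ℕ → Diagram → Prop
  | 0, _ => True
  | n + 1, D =>
      wdAux σ n D.src ∧
      ∀ i < D.cells.length,
        wdEmb σ (D.cells.getD i default).2
          (σ.gsrc (n + 1) (D.cells.getD i default).1) (slice σ D i) ∧
        wdAux σ n (slice σ D (i + 1))

/-- Well-definedness of a diagram: the source is well-defined and every
slice exists and is well-defined. -/
def wdDiagram (σ : Signature) (D : Diagram) : Prop := wdAux σ D.dim D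

/-- Two n-diagrams are globular when n = 0, or they have equal sources and
equal targets. -/
def globular (σ : Signature) (S T : Diagram) : Prop :=
  match S with
  | .base _ => True
  | .step _ _ => S.src = T.src ∧ tgt σ S = tgt σ T

/-- Vertical composite of two n-diagrams (`S` below `D`): the source of `S`
together with the concatenated cell lists. -/
def vcomp (S D : Diagram) : Diagram :=
  match S with
  | .base g => .base g
  | .step s c => .step s (c ++ D.cells)

/-- Data of the inclusion embedding `inc(S, D) : D ↪ S ∘ D` of an n-diagram
`D` into its composite with an m-diagram `S` of size `sLen`, `m ≤ n`. -/
def incData (m sLen : ℕ) : ℕ → List ℕ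
  | 0 => []
  | k + 1 => if m = k + 1 then sLen :: List.replicate k 0
             else 0 :: incData m sLen k

/-- Composite `S ∘ D` where `S` has dimension ≤ that of `D`: `S` is attached
on the source side of the shared boundary, so the embeddings of the cells of
`D` are composed with the inclusion embeddings. -/
def compL (S D : Diagram) : Diagram :=
  match D with
  | .base g => .base g
  | .step s c =>
      if S.dim = s.dim + 1 then vcomp S D
      else .step (compL S s)
        (c.map fun x => (x.1, embComp (incData S.dim S.size s.dim) x.2))

/-- Composite `D ∘ X` where `X` has dimension ≤ that of `D`: `X` is attached
on the target side of the shared boundary, so the cell data of `D` is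
unchanged and only the deep source changes. -/
def compR (D X : Diagram) : Diagram :=
  match D with
  | .base g => .base g
  | .step s c =>
      if X.dim = s.dim + 1 then vcomp D X
      else .step (compR s X) c

/-- The composite `X ∘ Y` of two diagrams along their unique common
boundary, determined by their dimensions. -/
def comp (X Y : Diagram) : Diagram :=
  if X.dim ≤ Y.dim then compL X Y else compR X Y

/-- The identity (n+1)-diagram on an n-diagram: source `D`, no cells. -/
def idDiag (D : Diagram) : Diagram := .step D []

/-- Composability of `X ∘ Y`: the matching condition on iterated
sources/targets along the shared boundary. -/
def composable (σ : Signature) (X Y : Diagram) : Prop :=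
  if X.dim ≤ Y.dim then tgt σ X = srcIter (Y.dim - X.dim + 1) Y
  else tgtIter σ (X.dim - Y.dim + 1) X = Y.src

lemma zipWith_add_assoc : ∀ a b v : List ℕ,
    List.zipWith (· + ·) a (List.zipWith (· + ·) b v)
      = List.zipWith (· + ·) (List.zipWith (· + ·) a b) v := by
  intro a
  induction a with
  | nil => intro b v; simp
  | cons x xs ih =>
    intro b v
    cases b with
    | nil => simp
    | cons y ys =>
      cases v with
      | nil => simp
      | cons z zs => simp [ih, Nat.add_assoc]

lemma zipWith_add_replicate_zero (k : ℕ) :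
    List.zipWith (· + ·) (List.replicate k 0) (List.replicate k (0:ℕ))
      = List.replicate k 0 := by
  induction k with
  | zero => rfl
  | succ n ih => simp [List.replicate_succ, ih]

lemma incData_add (m a b : ℕ) : ∀ k,
    List.zipWith (· + ·) (incData m a k) (incData m b k) = incData m (a + b) k := by
  intro k
  induction k with
  | zero => rfl
  | succ n ih =>
    by_cases h : m = n + 1
    · simp [incData, h, zipWith_add_replicate_zero]
    · simp [incData, h, ih]

lemma dim_compL : ∀ S D : Diagram, S.dim ≤ D.dim → (compL S D).dim = D.dim := by
  intro S D
  induction D with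
  | base g => intro _; rfl
  | step s c ih =>
    intro h
    by_cases hd : S.dim = s.dim + 1
    · simp only [compL, hd, if_pos rfl]
      -- S has dimension s.dim + 1 > 0, so S is a step
      cases S with
      | base g => simp [Diagram.dim] at hd
      | step ss sc => simpa [vcomp, Diagram.dim, Diagram.dim] using hd
    · simp only [compL, if_neg hd, Diagram.dim]
      have : S.dim ≤ s.dim := by
        have := Nat.lt_of_le_of_ne (by simpa [Diagram.dim] using h) hd
        omega
      rw [ih this]

lemma key_assoc (S D : Diagram) (hdim : S.dim = D.dim) (h0 : 0 < D.dim) :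
    ∀ M : Diagram, D.dim ≤ M.dim →
      compL S (compL D M) = compL (vcomp S D) M := by
  -- S and D are steps since their dimension is positive
  cases S with
  | base g => simp [Diagram.dim] at hdim; omega
  | step ss sc =>
    cases D with
    | base g => simp [Diagram.dim] at h0
    | step ds dc =>
      intro M
      induction M with
      | base g =>
        intro h; simp [Diagram.dim] at h h0
      | step ms mc ih =>
        intro h
        by_cases heq : (Diagram.step ds dc).dim = ms.dim + 1
        · -- equal dimensions: the vcomp branch
          simp only [compL, if_pos heq]
          have hveq : (vcomp (Diagram.step ss sc) (Diagram.step ds dc)).dim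
              = ms.dim + 1 := by
            simp [vcomp, Diagram.dim] at heq ⊢
            simp [Diagram.dim] at hdim
            omega
          have hseq : (Diagram.step ss sc).dim
              = (vcomp (Diagram.step ds dc) (Diagram.step ms mc)).src.dim + 1 := by
            simp [vcomp, Diagram.src]
            simp [Diagram.dim] at hdim heq ⊢
            omega
          simp only [compL, vcomp, Diagram.cells, Diagram.src, Diagram.dim] at hseq ⊢
          calc _ = ss.step (sc ++ (dc ++ mc)) := if_pos hseq
            _ = ss.step (sc ++ dc ++ mc) := by simp [vcomp, Diagram.cells, List.append_assoc]
            _ = _ := (if_pos (by simpa [vcomp, Diagram.dim] using hveq)).symm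
        · -- strict inequality: recurse
          have hlt : (Diagram.step ds dc).dim ≤ ms.dim := by
            simp [Diagram.dim] at h heq ⊢
            omega
          simp only [compL, if_neg heq]
          have hSne : ¬ (Diagram.step ss sc).dim
              = (compL (Diagram.step ds dc) ms).dim + 1 := by
            rw [dim_compL _ _ hlt, hdim]
            simp [Diagram.dim] at heq ⊢
            exact heq
          have hVne : ¬ (vcomp (Diagram.step ss sc) (Diagram.step ds dc)).dim
              = ms.dim + 1 := by
            simp [vcomp, Diagram.dim] at hdim heq ⊢
            omega
          simp only [compL, Diagram.cells, Diagram.dim] at hSne hVne ⊢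
          simp only [if_neg hVne]
          refine (if_neg hSne).trans ?_
          congr 1
          · exact ih hlt
          · rw [List.map_map]
            apply List.map_congr_left
            intro x _
            simp only [Function.comp, embComp]
            have hdims : (compL (Diagram.step ds dc) ms).dim = ms.dim :=
              dim_compL _ _ hlt
            have hdd : ds.dim = ss.dim := by
              simp [Diagram.dim] at hdim; omega
            rw [hdims, zipWith_add_assoc]
            simp only [vcomp, Diagram.size, Diagram.cells, Diagram.dim,
              List.length_append]
            rw [hdd, incData_add]

/-- **Associative diagram composition.**  For well-defined n-diagrams `D, S`
and a well-defined l-diagram `M` with `l > n > 0`, such that the composites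
exist, `S ∘ (D ∘ M) = (S ∘ D) ∘ M`. -/
theorem comp_assoc (σ : Signature) (D S M : Diagram)
    (hdim : S.dim = D.dim) (h0 : 0 < D.dim) (hl : D.dim < M.dim)
    (hD : wdDiagram σ D) (hS : wdDiagram σ S) (hM : wdDiagram σ M)
    (hSD : tgt σ S = D.src)
    (hDM : tgt σ D = srcIter (M.dim - D.dim + 1) M) :
    comp S (comp D M) = comp (comp S D) M := by
  have hle : D.dim ≤ M.dim := le_of_lt hl
  have hSle : S.dim ≤ M.dim := by omega
  have hSDle : S.dim ≤ D.dim := le_of_eq hdim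
  -- comp D M = compL D M
  have h1 : comp D M = compL D M := by rw [comp, if_pos hle]
  rw [h1]
  have hdimDM : (compL D M).dim = M.dim := dim_compL D M hle
  have h2 : comp S (compL D M) = compL S (compL D M) := by
    rw [comp, hdimDM, if_pos hSle]
  rw [h2]
  -- comp S D = vcomp S D
  have hSD' : comp S D = vcomp S D := by
    rw [comp, if_pos hSDle]
    cases D with
    | base g => simp [Diagram.dim] at h0
    | step ds dc =>
      have : S.dim = ds.dim + 1 := by simpa [Diagram.dim] using hdim
      simp [compL, this]
  rw [hSD']
  have hvd : (vcomp S D).dim = S.dim := by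
    cases S with
    | base g => simp [Diagram.dim] at hdim; omega
    | step ss sc => simp [vcomp, Diagram.dim]
  have h3 : comp (vcomp S D) M = compL (vcomp S D) M := by
    rw [comp, hvd, if_pos hSle]
  rw [h3]
  exact key_assoc S D hdim h0 M hle

end QS
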